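/- Let a_{jk}(v) = (δ_{jk}|v|² - v_j v_k)|v|^γ with -3 < γ < 0, and let μ(v) = (2π)^{-3/2}e^{-|v|²/2}. Then there exists C₀ > 0 such that for all j, k ∈ {1,2,3} and all v ∈ ℝ³, |(a_{jk} * (v_k μ))(v)| ≤ C₀ ⟨v⟩^{γ+2}, where the convolution is (a_{jk}*(v_kμ))(v) = ∫ a_{jk}(v-v') v'_k μ(v') dv'. -/

import Mathlib

open MeasureTheory Real Set

/-- The Landau collision kernel matrix `a_{jk}(v) = (δ_{jk}|v|² - v_j v_k)|v|^γ`. -/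
noncomputable def landauA (γ : ℝ) (j k : Fin 3) (v : Fin 3 → ℝ) : ℝ :=
  ((if j = k then (1 : ℝ) else 0) * (∑ i, v i ^ 2) - v j * v k) *
    (∑ i, v i ^ 2) ^ (γ / 2)

/-- The standard Maxwellian on `ℝ³`. -/
noncomputable def maxwellian (v : Fin 3 → ℝ) : ℝ :=
  (2 * π) ^ (-(3 : ℝ) / 2) * Real.exp (-(∑ i, v i ^ 2) / 2)

namespace LandauAux

/-- squared Euclidean norm -/
noncomputable def Q (v : Fin 3 → ℝ) : ℝ := ∑ i, v i ^ 2

lemma Q_nonneg (v : Fin 3 → ℝ) : 0 ≤ Q v := Finset.sum_nonneg fun i _ => sq_nonneg _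

lemma sq_le_Q (v : Fin 3 → ℝ) (i : Fin 3) : v i ^ 2 ≤ Q v :=
  Finset.single_le_sum (fun j _ => sq_nonneg (v j)) (Finset.mem_univ i)

lemma measurable_Q : Measurable Q :=
  Finset.measurable_sum _ fun i _ => (measurable_pi_apply i).pow_const 2

lemma measurable_Qrpow (c : ℝ) : Measurable fun w : Fin 3 → ℝ => Q w ^ c :=
  (by measurability : Measurable fun x : ℝ => x ^ c).comp measurable_Q

lemma sqrt_Q_add_le (x y : Fin 3 → ℝ) : √(Q (x + y)) ≤ √(Q x) + √(Q y) := by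
  have cs : (∑ i, x i * y i) ^ 2 ≤ Q x * Q y := Finset.sum_mul_sq_le_sq_mul_sq _ _ _
  have h1 : ∑ i, x i * y i ≤ √(Q x) * √(Q y) := by
    have h2 : √((∑ i, x i * y i) ^ 2) ≤ √(Q x * Q y) := Real.sqrt_le_sqrt cs
    rw [Real.sqrt_sq_eq_abs, Real.sqrt_mul (Q_nonneg x)] at h2
    exact (le_abs_self _).trans h2
  have ex : Q (x + y) = Q x + 2 * (∑ i, x i * y i) + Q y := by
    simp only [Q, Pi.add_apply, add_sq, Finset.sum_add_distrib, Finset.mul_sum, mul_assoc]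
  have hQ : Q (x + y) ≤ (√(Q x) + √(Q y)) ^ 2 := by
    rw [ex]
    nlinarith [Real.sq_sqrt (Q_nonneg x), Real.sq_sqrt (Q_nonneg y)]
  calc √(Q (x + y)) ≤ √((√(Q x) + √(Q y)) ^ 2) := Real.sqrt_le_sqrt hQ
    _ = √(Q x) + √(Q y) := Real.sqrt_sq (by positivity)

lemma integrable_gauss {b : ℝ} (hb : 0 < b) :
    Integrable (fun v : Fin 3 → ℝ => Real.exp (-(b * Q v))) := by
  have h : (fun v : Fin 3 → ℝ => Real.exp (-(b * Q v)))
      = fun v => ∏ i, Real.exp (-b * v i ^ 2) := by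
    funext v
    rw [← Real.exp_sum]
    congr 1
    simp only [Q, Finset.mul_sum, neg_mul, Finset.sum_neg_distrib]
  rw [h]
  exact Integrable.fintype_prod fun _ => integrable_exp_neg_mul_sq hb

lemma oneD_rpow {α : ℝ} (hα : -1 < α) :
    IntegrableOn (fun t : ℝ => |t| ^ α) (Icc (-1) 1) := by
  have h01 : IntegrableOn (fun t : ℝ => |t| ^ α) (Icc 0 1) := by
    have h : IntegrableOn (fun t : ℝ => t ^ α) (Icc 0 1) := by
      rw [integrableOn_Icc_iff_integrableOn_Ioc]
      have h2 := intervalIntegral.intervalIntegrable_rpow' (a := 0) (b := 1) hα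
      rw [intervalIntegrable_iff, uIoc_of_le (zero_le_one' ℝ)] at h2
      exact h2
    exact h.congr_fun (fun t ht => by rw [abs_of_nonneg ht.1]) measurableSet_Icc
  have hneg : IntegrableOn (fun t : ℝ => |t| ^ α) (Icc (-1) 0) := by
    have hpre : (fun t : ℝ => -t) ⁻¹' (Icc 0 1) = Icc (-1) 0 := by
      ext t
      simp only [mem_preimage, mem_Icc, neg_le, le_neg]
      constructor
      · rintro ⟨h1, h2⟩; exact ⟨by linarith, by linarith⟩
      · rintro ⟨h1, h2⟩; exact ⟨by linarith, by linarith⟩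
    have hmp := Measure.measurePreserving_neg (volume : Measure ℝ)
    have hemb : MeasurableEmbedding (fun t : ℝ => -t) :=
      (Homeomorph.neg ℝ).measurableEmbedding
    have h3 := (hmp.integrableOn_comp_preimage hemb
      (f := fun t : ℝ => |t| ^ α) (s := Icc 0 1)).mpr h01
    rw [hpre] at h3
    have h4 : ((fun t : ℝ => |t| ^ α) ∘ fun t => -t) = fun t : ℝ => |t| ^ α := by
      funext t; simp [Function.comp, abs_neg]
    rwa [h4] at h3
  have := hneg.union h01
  rwa [Set.Icc_union_Icc_eq_Icc (by norm_num : (-1:ℝ) ≤ 0) (zero_le_one' ℝ)] at this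

lemma integrableOn_sing {α : ℝ} (hα1 : -1 < α) (hα0 : α < 0) :
    IntegrableOn (fun w : Fin 3 → ℝ => Q w ^ (α / 2)) {w | Q w < 1} := by
  set T : Set (Fin 3 → ℝ) := Set.pi univ fun _ => Icc (-1 : ℝ) 1 with hT
  have hTmeas : MeasurableSet T := MeasurableSet.univ_pi fun _ => measurableSet_Icc
  have hTint : IntegrableOn (fun w : Fin 3 → ℝ => |w 0| ^ α) T := by
    rw [← integrable_indicator_iff hTmeas]
    have heq : T.indicator (fun w : Fin 3 → ℝ => |w 0| ^ α)
        = fun w => ∏ i : Fin 3,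
            (Icc (-1 : ℝ) 1).indicator (fun t => if i = 0 then |t| ^ α else 1) (w i) := by
      funext w
      by_cases hw : w ∈ T
      · rw [indicator_of_mem hw]
        have hm : ∀ i, w i ∈ Icc (-1 : ℝ) 1 := fun i => hw i (Set.mem_univ i)
        rw [Fin.prod_univ_three]
        rw [indicator_of_mem (hm 0), indicator_of_mem (hm 1), indicator_of_mem (hm 2)]
        rw [if_pos rfl, if_neg (by decide : ¬(1:Fin 3) = 0), if_neg (by decide : ¬(2:Fin 3) = 0)]
        ring
      · rw [indicator_of_notMem hw]
        have : ∃ i, w i ∉ Icc (-1 : ℝ) 1 := by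
          by_contra hcon
          push_neg at hcon
          exact hw fun i _ => hcon i
        obtain ⟨i, hi⟩ := this
        exact (Finset.prod_eq_zero (Finset.mem_univ i) (by rw [indicator_of_notMem hi])).symm
    rw [heq]
    apply Integrable.fintype_prod (f := fun i t =>
      (Icc (-1 : ℝ) 1).indicator (fun t => if i = 0 then |t| ^ α else 1) t)
    intro i
    rw [integrable_indicator_iff measurableSet_Icc]
    by_cases hi : i = 0
    · subst hi
      simp only [if_pos rfl]
      exact oneD_rpow hα1
    · simp only [if_neg hi]
      exact (integrableOn_const_iff).mpr (Or.inr measure_Icc_lt_top)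
  have hsub : {w : Fin 3 → ℝ | Q w < 1} ⊆ T := by
    intro w hw i _
    have h1 : w i ^ 2 ≤ Q w := sq_le_Q w i
    have h2 : Q w < 1 := hw
    constructor
    · nlinarith [sq_nonneg (w i + 1)]
    · nlinarith [sq_nonneg (w i - 1)]
  refine Integrable.mono' (hTint.mono_set hsub)
    ((measurable_Qrpow (α / 2)).aestronglyMeasurable) ?_
  have h0 : ∀ᵐ w : Fin 3 → ℝ ∂volume, w 0 ≠ (0:ℝ) := by
    have hz := Measure.pi_hyperplane (fun _ : Fin 3 => (volume : Measure ℝ)) 0 (0:ℝ)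
    rw [ae_iff]
    have he : {w : Fin 3 → ℝ | ¬ w 0 ≠ (0:ℝ)} = {f : Fin 3 → ℝ | f 0 = 0} := by ext w; simp
    rw [he, volume_pi]
    exact hz
  refine ae_restrict_of_ae ?_
  filter_upwards [h0] with w hw
  have hq : (0:ℝ) < w 0 ^ 2 := by positivity
  have h1 : w 0 ^ 2 ≤ Q w := sq_le_Q w 0
  rw [Real.norm_eq_abs, abs_of_nonneg (rpow_nonneg (Q_nonneg w) _)]
  calc Q w ^ (α / 2) ≤ (w 0 ^ 2) ^ (α / 2) :=
        rpow_le_rpow_of_nonpos hq h1 (by linarith)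
    _ = |w 0| ^ α := by
        rw [← sq_abs, ← Real.rpow_natCast |w 0| 2, ← Real.rpow_mul (abs_nonneg _)]
        rw [show ((2:ℕ):ℝ) * (α / 2) = α by push_cast; ring]

lemma sing_shift {α : ℝ} (hα1 : -1 < α) (hα0 : α < 0) (v : Fin 3 → ℝ) :
    IntegrableOn (fun v' : Fin 3 → ℝ => Q (v - v') ^ (α / 2)) {v' | Q (v - v') < 1} ∧
      ∫ v' in {v' : Fin 3 → ℝ | Q (v - v') < 1}, Q (v - v') ^ (α / 2)
        = ∫ w in {w : Fin 3 → ℝ | Q w < 1}, Q w ^ (α / 2) := by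
  have hmp : MeasurePreserving (fun t : Fin 3 → ℝ => v - t) volume volume :=
    Measure.measurePreserving_sub_left volume v
  have hemb : MeasurableEmbedding (fun t : Fin 3 → ℝ => v - t) := by
    have := (MeasurableEquiv.subLeft v).measurableEmbedding
    convert this using 1
    funext t; rfl
  have hpre : (fun t : Fin 3 → ℝ => v - t) ⁻¹' {w | Q w < 1} = {v' | Q (v - v') < 1} := rfl
  constructor
  · have h := (hmp.integrableOn_comp_preimage hemb
      (f := fun w : Fin 3 → ℝ => Q w ^ (α / 2)) (s := {w | Q w < 1})).mpr
      (integrableOn_sing hα1 hα0)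
    rw [hpre] at h
    exact h
  · have h := hmp.setIntegral_preimage_emb hemb
      (fun w : Fin 3 → ℝ => Q w ^ (α / 2)) {w | Q w < 1}
    rw [hpre] at h
    exact h

lemma pointwise_bound (γ : ℝ) (j k : Fin 3) (v v' : Fin 3 → ℝ) :
    |landauA γ j k (v - v') * v' k * maxwellian v'| ≤
      2 * (2 * π) ^ (-(3 : ℝ) / 2) * (Q (v - v') ^ ((γ + 2) / 2) * Real.exp (-(1/4 * Q v'))) := by
  have hQw : 0 ≤ Q (v - v') := Q_nonneg _
  have hQ' : 0 ≤ Q v' := Q_nonneg v'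
  have hπ : (0:ℝ) < (2 * π) ^ (-(3 : ℝ) / 2) := rpow_pos_of_pos (by positivity) _
  -- bound on landauA
  have hland : |landauA γ j k (v - v')| ≤ 2 * Q (v - v') ^ ((γ + 2) / 2) := by
    set w := v - v' with hwdef
    have hQdef : (∑ i, w i ^ 2) = Q w := rfl
    have habs : |(if j = k then (1:ℝ) else 0) * Q w - w j * w k| ≤ 2 * Q w := by
      have h1 : |w j| * |w k| ≤ Q w := by
        nlinarith [sq_nonneg (|w j| - |w k|), sq_abs (w j), sq_abs (w k),
          sq_le_Q w j, sq_le_Q w k]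
      have h2 : -(Q w) ≤ w j * w k ∧ w j * w k ≤ Q w := by
        constructor <;> nlinarith [neg_abs_le (w j * w k), le_abs_self (w j * w k),
          abs_mul (w j) (w k), h1]
      rw [abs_le]
      constructor <;> split_ifs <;> simp <;> nlinarith [h2.1, h2.2, hQw]
    rcases eq_or_lt_of_le (Q_nonneg w) with h0 | h0
    · have hjk : w j * w k = 0 := by
        have hj : w j ^ 2 ≤ Q w := sq_le_Q w j
        have : w j = 0 := by nlinarith [sq_nonneg (w j)]
        rw [this, zero_mul]
      have hz : landauA γ j k w = 0 := by
        rw [landauA, hQdef, ← h0, hjk]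
        ring
      rw [hz, abs_zero]
      positivity
    · have heq : |landauA γ j k w| = |(if j = k then (1:ℝ) else 0) * Q w - w j * w k| * Q w ^ (γ / 2) := by
        rw [landauA, hQdef, abs_mul, abs_of_nonneg (rpow_nonneg hQw _)]
      rw [heq]
      calc |(if j = k then (1:ℝ) else 0) * Q w - w j * w k| * Q w ^ (γ / 2)
          ≤ (2 * Q w) * Q w ^ (γ / 2) :=
            mul_le_mul_of_nonneg_right habs (rpow_nonneg hQw _)
        _ = 2 * Q w ^ ((γ + 2) / 2) := by
            rw [show (γ + 2) / 2 = 1 + γ / 2 by ring, Real.rpow_add h0, Real.rpow_one]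
            ring
  -- bound on the moment factor
  have hmom : |v' k| * maxwellian v' ≤ (2 * π) ^ (-(3 : ℝ) / 2) * Real.exp (-(1/4 * Q v')) := by
    rw [maxwellian]
    have hQdef : (∑ i, v' i ^ 2) = Q v' := rfl
    rw [hQdef]
    have h1 : |v' k| ≤ √(Q v') := by
      rw [← Real.sqrt_sq_eq_abs]
      exact Real.sqrt_le_sqrt (sq_le_Q v' k)
    have h2 : √(Q v') ≤ Real.exp (1/4 * Q v') := by
      nlinarith [Real.add_one_le_exp (1/4 * Q v'), sq_nonneg (√(Q v') - 2),
        Real.sq_sqrt hQ', Real.sqrt_nonneg (Q v')]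
    calc |v' k| * ((2 * π) ^ (-(3 : ℝ) / 2) * Real.exp (-(Q v') / 2))
        = (2 * π) ^ (-(3 : ℝ) / 2) * (|v' k| * Real.exp (-(Q v') / 2)) := by ring
      _ ≤ (2 * π) ^ (-(3 : ℝ) / 2) * (Real.exp (1/4 * Q v') * Real.exp (-(Q v') / 2)) := by
          apply mul_le_mul_of_nonneg_left _ hπ.le
          exact mul_le_mul_of_nonneg_right (h1.trans h2) (Real.exp_pos _).le
      _ = (2 * π) ^ (-(3 : ℝ) / 2) * Real.exp (-(1/4 * Q v')) := by
          rw [← Real.exp_add]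
          ring_nf
  have hmax_pos : 0 < maxwellian v' := by
    rw [maxwellian]; positivity
  calc |landauA γ j k (v - v') * v' k * maxwellian v'|
      = |landauA γ j k (v - v')| * (|v' k| * maxwellian v') := by
        rw [abs_mul, abs_mul, abs_of_pos hmax_pos, mul_assoc]
    _ ≤ (2 * Q (v - v') ^ ((γ + 2) / 2)) * ((2 * π) ^ (-(3 : ℝ) / 2) * Real.exp (-(1/4 * Q v'))) := by
        apply mul_le_mul hland hmom (by positivity) (by positivity)
    _ = 2 * (2 * π) ^ (-(3 : ℝ) / 2) * (Q (v - v') ^ ((γ + 2) / 2) * Real.exp (-(1/4 * Q v'))) := by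
        ring

end LandauAux

set_option maxHeartbeats 2000000 in
open LandauAux in
theorem landauA_conv_moment_bound (γ : ℝ) (hγ1 : -3 < γ) (hγ2 : γ < 0) :
    ∃ C > 0, ∀ (j k : Fin 3) (v : Fin 3 → ℝ),
      |∫ v' : Fin 3 → ℝ, landauA γ j k (v - v') * v' k * maxwellian v'| ≤
        C * (1 + ∑ i, v i ^ 2) ^ ((γ + 2) / 2) := by
  have hπ : (0:ℝ) < (2 * π) ^ (-(3 : ℝ) / 2) := rpow_pos_of_pos (by positivity) _
  set c₁ : ℝ := 2 * (2 * π) ^ (-(3 : ℝ) / 2) with hc₁def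
  have hc₁ : 0 < c₁ := by positivity
  have hI8int : Integrable (fun v' : Fin 3 → ℝ => Real.exp (-(1/8 * Q v'))) :=
    integrable_gauss (by norm_num)
  have hI4int : Integrable (fun v' : Fin 3 → ℝ => Real.exp (-(1/4 * Q v'))) :=
    integrable_gauss (by norm_num)
  set I8 : ℝ := ∫ v' : Fin 3 → ℝ, Real.exp (-(1/8 * Q v')) with hI8def
  set I4 : ℝ := ∫ v' : Fin 3 → ℝ, Real.exp (-(1/4 * Q v')) with hI4def
  have hI8 : 0 ≤ I8 := integral_nonneg fun x => (Real.exp_pos _).le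
  have hI4 : 0 ≤ I4 := integral_nonneg fun x => (Real.exp_pos _).le
  rcases le_or_gt 0 (γ + 2) with hcase | hcase
  · -- easy case : γ + 2 ≥ 0
    refine ⟨c₁ * 34 * I8 + 1, ?_, fun j k v => ?_⟩
    · nlinarith [mul_nonneg (mul_nonneg hc₁.le (by norm_num : (0:ℝ) ≤ 34)) hI8]
    have hQv : (0:ℝ) ≤ Q v := Q_nonneg v
    have hP1 : (1:ℝ) ≤ 1 + Q v := by linarith
    have hPpos : (0:ℝ) < 1 + Q v := by linarith
    have hdom : ∀ v', |landauA γ j k (v - v') * v' k * maxwellian v'| ≤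
        (c₁ * 34 * (1 + Q v) ^ ((γ + 2) / 2)) * Real.exp (-(1/8 * Q v')) := by
      intro v'
      refine (pointwise_bound γ j k v v').trans ?_
      have hQ' : (0:ℝ) ≤ Q v' := Q_nonneg v'
      have key : Q (v - v') ^ ((γ + 2) / 2) * Real.exp (-(1/4 * Q v'))
          ≤ 34 * (1 + Q v) ^ ((γ + 2) / 2) * Real.exp (-(1/8 * Q v')) := by
        have hs : Q (v - v') ≤ 2 * Q v + 2 * Q v' := by
          have hpt : ∀ i : Fin 3, (v - v') i ^ 2 ≤ 2 * v i ^ 2 + 2 * v' i ^ 2 := by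
            intro i; simp only [Pi.sub_apply]; nlinarith [sq_nonneg (v i + v' i)]
          calc Q (v - v') ≤ ∑ i, (2 * v i ^ 2 + 2 * v' i ^ 2) :=
                Finset.sum_le_sum fun i _ => hpt i
            _ = 2 * Q v + 2 * Q v' := by
                rw [Finset.sum_add_distrib, ← Finset.mul_sum, ← Finset.mul_sum]; rfl
        have h6 : 1 + Q (v - v') ≤ 2 * (1 + Q v) * (1 + Q v') := by nlinarith
        have step1 : Q (v - v') ^ ((γ + 2) / 2) ≤ (2 * (1 + Q v) * (1 + Q v')) ^ ((γ + 2) / 2) :=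
          rpow_le_rpow (Q_nonneg _) (by linarith) (by linarith)
        have step2 : (2 * (1 + Q v) * (1 + Q v')) ^ ((γ + 2) / 2)
            = 2 ^ ((γ + 2) / 2) * (1 + Q v) ^ ((γ + 2) / 2) * (1 + Q v') ^ ((γ + 2) / 2) := by
          rw [mul_rpow (by positivity) (by positivity), mul_rpow (by norm_num) (by positivity)]
        have h2a : (2:ℝ) ^ ((γ + 2) / 2) ≤ 2 := by
          have h := rpow_le_rpow_of_exponent_le (by norm_num : (1:ℝ) ≤ 2)
            (by linarith : (γ + 2) / 2 ≤ 1)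
          rwa [Real.rpow_one] at h
        have h2b : (1 + Q v') ^ ((γ + 2) / 2) ≤ 1 + Q v' := by
          have h := rpow_le_rpow_of_exponent_le (by linarith : (1:ℝ) ≤ 1 + Q v')
            (by linarith : (γ + 2) / 2 ≤ 1)
          rwa [Real.rpow_one] at h
        have h17 : (1 + Q v') * Real.exp (-(1/4 * Q v')) ≤ 17 * Real.exp (-(1/8 * Q v')) := by
          have e1 : Real.exp (-(1/4 * Q v'))
              = Real.exp (-(1/8 * Q v')) * Real.exp (-(1/8 * Q v')) := by
            rw [← Real.exp_add]; congr 1; ring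
          have h := Real.add_one_le_exp (1/8 * Q v')
          have e3 : (1 + 1/8 * Q v') * Real.exp (-(1/8 * Q v')) ≤ 1 := by
            calc (1 + 1/8 * Q v') * Real.exp (-(1/8 * Q v'))
                ≤ Real.exp (1/8 * Q v') * Real.exp (-(1/8 * Q v')) :=
                  mul_le_mul_of_nonneg_right (by linarith) (Real.exp_pos _).le
              _ = 1 := by rw [← Real.exp_add]; simp
          rw [e1]
          nlinarith [Real.exp_pos (-(1/8 * Q v')), sq_nonneg (Real.exp (-(1/8 * Q v'))), hQ',
            mul_le_mul_of_nonneg_left e3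
              (show (0:ℝ) ≤ 8 * Real.exp (-(1/8 * Q v')) by positivity)]
        have hr : (0:ℝ) ≤ (1 + Q v) ^ ((γ + 2) / 2) := rpow_nonneg (by linarith) _
        calc Q (v - v') ^ ((γ + 2) / 2) * Real.exp (-(1/4 * Q v'))
            ≤ (2 ^ ((γ + 2) / 2) * (1 + Q v) ^ ((γ + 2) / 2) * (1 + Q v') ^ ((γ + 2) / 2)) *
                Real.exp (-(1/4 * Q v')) := by
              rw [← step2]; exact mul_le_mul_of_nonneg_right step1 (Real.exp_pos _).le
          _ ≤ (2 * (1 + Q v) ^ ((γ + 2) / 2) * (1 + Q v')) * Real.exp (-(1/4 * Q v')) := by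
              apply mul_le_mul_of_nonneg_right _ (Real.exp_pos _).le
              apply mul_le_mul (mul_le_mul h2a le_rfl hr (by norm_num)) h2b
                (rpow_nonneg (by linarith) _) (by positivity)
          _ = (2 * (1 + Q v) ^ ((γ + 2) / 2)) * ((1 + Q v') * Real.exp (-(1/4 * Q v'))) := by
              ring
          _ ≤ (2 * (1 + Q v) ^ ((γ + 2) / 2)) * (17 * Real.exp (-(1/8 * Q v'))) := by
              apply mul_le_mul_of_nonneg_left h17 (by positivity)
          _ = 34 * (1 + Q v) ^ ((γ + 2) / 2) * Real.exp (-(1/8 * Q v')) := by ring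
      calc c₁ * (Q (v - v') ^ ((γ + 2) / 2) * Real.exp (-(1/4 * Q v')))
          ≤ c₁ * (34 * (1 + Q v) ^ ((γ + 2) / 2) * Real.exp (-(1/8 * Q v'))) :=
            mul_le_mul_of_nonneg_left key hc₁.le
        _ = (c₁ * 34 * (1 + Q v) ^ ((γ + 2) / 2)) * Real.exp (-(1/8 * Q v')) := by ring
    have hQveq : (∑ i, v i ^ 2) = Q v := rfl
    rw [hQveq]
    have hintD : Integrable (fun v' : Fin 3 → ℝ =>
        (c₁ * 34 * (1 + Q v) ^ ((γ + 2) / 2)) * Real.exp (-(1/8 * Q v'))) :=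
      hI8int.const_mul _
    calc |∫ v' : Fin 3 → ℝ, landauA γ j k (v - v') * v' k * maxwellian v'|
        ≤ ∫ v' : Fin 3 → ℝ, (c₁ * 34 * (1 + Q v) ^ ((γ + 2) / 2)) * Real.exp (-(1/8 * Q v')) := by
          rw [← Real.norm_eq_abs]
          exact norm_integral_le_of_norm_le hintD (Filter.Eventually.of_forall fun v' => by
            rw [Real.norm_eq_abs]; exact hdom v')
      _ = (c₁ * 34) * (1 + Q v) ^ ((γ + 2) / 2) * I8 := by
          rw [integral_const_mul]
      _ ≤ (c₁ * 34 * I8 + 1) * (1 + Q v) ^ ((γ + 2) / 2) := by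
          have hp : (0:ℝ) < (1 + Q v) ^ ((γ + 2) / 2) := rpow_pos_of_pos hPpos _
          nlinarith [hp]
  · -- hard case : γ + 2 < 0
    have hα1 : (-1:ℝ) < γ + 2 := by linarith
    set S0 : Set (Fin 3 → ℝ) := {w | Q w < 1} with hS0def
    have hS0meas : MeasurableSet S0 := measurableSet_lt measurable_Q measurable_const
    set J : ℝ := ∫ w in S0, Q w ^ ((γ + 2) / 2) with hJdef
    have hJ : 0 ≤ J := setIntegral_nonneg hS0meas fun w _ => rpow_nonneg (Q_nonneg w) _
    refine ⟨c₁ * (64 * Real.exp (1/8) * (J + I8) + 2 * I4) + 1, ?_, fun j k v => ?_⟩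
    · have h64 : (0:ℝ) ≤ 64 * Real.exp (1/8) * (J + I8) + 2 * I4 := by
        have : (0:ℝ) ≤ 64 * Real.exp (1/8) * (J + I8) :=
          mul_nonneg (by positivity) (by linarith)
        linarith
      nlinarith [mul_nonneg hc₁.le h64]
    have hQv : (0:ℝ) ≤ Q v := Q_nonneg v
    have hP1 : (1:ℝ) ≤ 1 + Q v := by linarith
    have hPpos : (0:ℝ) < 1 + Q v := by linarith
    obtain ⟨hSint, hSval⟩ := sing_shift hα1 hcase v
    set Sv : Set (Fin 3 → ℝ) := {v' | Q (v - v') < 1} with hSvdef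
    have hSvmeas : MeasurableSet Sv :=
      measurableSet_lt (measurable_Q.comp (measurable_const.sub measurable_id)) measurable_const
    have hind_int : Integrable (Sv.indicator fun u => Q (v - u) ^ ((γ + 2) / 2)) :=
      (integrable_indicator_iff hSvmeas).2 hSint
    set D : (Fin 3 → ℝ) → ℝ := fun v' =>
      c₁ * (Real.exp (1/8) * Real.exp (-((1 + Q v) / 64)) *
          (Sv.indicator (fun u => Q (v - u) ^ ((γ + 2) / 2)) v' + Real.exp (-(1/8 * Q v'))) +
        2 * (1 + Q v) ^ ((γ + 2) / 2) * Real.exp (-(1/4 * Q v'))) with hDdef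
    have hDint : Integrable D := by
      apply Integrable.const_mul
      exact ((hind_int.add hI8int).const_mul
          (Real.exp (1/8) * Real.exp (-((1 + Q v) / 64)))).add
        (hI4int.const_mul (2 * (1 + Q v) ^ ((γ + 2) / 2)))
    have hDbound : ∀ v', |landauA γ j k (v - v') * v' k * maxwellian v'| ≤ D v' := by
      intro v'
      refine (pointwise_bound γ j k v v').trans ?_
      apply mul_le_mul_of_nonneg_left _ hc₁.le
      have hQ' : (0:ℝ) ≤ Q v' := Q_nonneg v'
      have hQw : (0:ℝ) ≤ Q (v - v') := Q_nonneg (v - v')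
      have hindnn : 0 ≤ Sv.indicator (fun u => Q (v - u) ^ ((γ + 2) / 2)) v' :=
        indicator_nonneg (fun u _ => rpow_nonneg (Q_nonneg _) _) v'
      by_cases hA : Q (v - v') < (1 + Q v) / 4
      · have hlow : (1 + Q v) / 8 - 1 ≤ Q v' := by
          have hv : v' + (v - v') = v := by abel
          have t1 : √(Q v) ≤ √(Q v') + √(Q (v - v')) := by
            calc √(Q v) = √(Q (v' + (v - v'))) := by rw [hv]
              _ ≤ _ := sqrt_Q_add_le v' (v - v')
          nlinarith [Real.sq_sqrt hQ', Real.sq_sqrt hQw, Real.sq_sqrt hQv,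
            Real.sqrt_nonneg (Q v'), Real.sqrt_nonneg (Q (v - v')), Real.sqrt_nonneg (Q v),
            mul_self_le_mul_self (Real.sqrt_nonneg (Q v)) t1,
            sq_nonneg (√(Q v') - √(Q (v - v'))), hA]
        have hexp8 : Real.exp (-(1/8 * Q v')) ≤ Real.exp (1/8) * Real.exp (-((1 + Q v) / 64)) := by
          rw [← Real.exp_add]
          apply Real.exp_le_exp.2
          linarith
        have hone : Real.exp (-(1/8 * Q v')) ≤ 1 := by
          calc Real.exp (-(1/8 * Q v')) ≤ Real.exp 0 := Real.exp_le_exp.2 (by linarith)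
            _ = 1 := Real.exp_zero
        have hind : Q (v - v') ^ ((γ + 2) / 2) * Real.exp (-(1/8 * Q v'))
            ≤ Sv.indicator (fun u => Q (v - u) ^ ((γ + 2) / 2)) v' + Real.exp (-(1/8 * Q v')) := by
          by_cases hS : v' ∈ Sv
          · rw [indicator_of_mem hS]
            have h1 : Q (v - v') ^ ((γ + 2) / 2) * Real.exp (-(1/8 * Q v'))
                ≤ Q (v - v') ^ ((γ + 2) / 2) * 1 :=
              mul_le_mul_of_nonneg_left hone (rpow_nonneg hQw _)
            nlinarith [Real.exp_pos (-(1/8 * Q v'))]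
          · rw [indicator_of_notMem hS]
            have h1 : (1:ℝ) ≤ Q (v - v') := not_lt.1 hS
            have h2 : Q (v - v') ^ ((γ + 2) / 2) ≤ 1 := by
              have h := rpow_le_rpow_of_nonpos one_pos h1 (by linarith : (γ + 2) / 2 ≤ 0)
              rwa [Real.one_rpow] at h
            nlinarith [Real.exp_pos (-(1/8 * Q v')), rpow_nonneg hQw ((γ + 2) / 2)]
        have hsplit : Real.exp (-(1/4 * Q v'))
            = Real.exp (-(1/8 * Q v')) * Real.exp (-(1/8 * Q v')) := by
          rw [← Real.exp_add]; congr 1; ring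
        have main : Q (v - v') ^ ((γ + 2) / 2) * Real.exp (-(1/4 * Q v'))
            ≤ Real.exp (1/8) * Real.exp (-((1 + Q v) / 64)) *
              (Sv.indicator (fun u => Q (v - u) ^ ((γ + 2) / 2)) v' + Real.exp (-(1/8 * Q v'))) := by
          rw [hsplit, ← mul_assoc]
          calc Q (v - v') ^ ((γ + 2) / 2) * Real.exp (-(1/8 * Q v')) * Real.exp (-(1/8 * Q v'))
              ≤ (Sv.indicator (fun u => Q (v - u) ^ ((γ + 2) / 2)) v' + Real.exp (-(1/8 * Q v'))) *
                (Real.exp (1/8) * Real.exp (-((1 + Q v) / 64))) := by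
                apply mul_le_mul hind hexp8 (Real.exp_pos _).le
                  (by nlinarith [Real.exp_pos (-(1/8 * Q v'))])
            _ = _ := by ring
        have hterm2 : (0:ℝ) ≤ 2 * (1 + Q v) ^ ((γ + 2) / 2) * Real.exp (-(1/4 * Q v')) := by
          positivity
        linarith [main, hterm2]
      · have h1 : (1 + Q v) / 4 ≤ Q (v - v') := not_lt.1 hA
        have h2 : Q (v - v') ^ ((γ + 2) / 2) ≤ 2 * (1 + Q v) ^ ((γ + 2) / 2) := by
          have h3 : Q (v - v') ^ ((γ + 2) / 2) ≤ ((1 + Q v) / 4) ^ ((γ + 2) / 2) :=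
            rpow_le_rpow_of_nonpos (by positivity) h1 (by linarith)
          have h4 : ((1 + Q v) / 4) ^ ((γ + 2) / 2)
              = (1 + Q v) ^ ((γ + 2) / 2) / (4:ℝ) ^ ((γ + 2) / 2) :=
            div_rpow (by linarith) (by norm_num) _
          have h42 : (4:ℝ) ^ (-(1:ℝ)/2) = 1/2 := by
            have hh : (4:ℝ) ^ ((1:ℝ)/2) = 2 := by
              have h4e : (4:ℝ) = (2:ℝ) ^ (2:ℕ) := by norm_num
              rw [h4e, ← Real.rpow_natCast (2:ℝ) 2,
                ← Real.rpow_mul (by norm_num : (0:ℝ) ≤ 2)]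
              norm_num
            rw [show (-(1:ℝ)/2) = -((1:ℝ)/2) by ring, Real.rpow_neg (by norm_num), hh]
            norm_num
          have hb : (1:ℝ)/2 ≤ (4:ℝ) ^ ((γ + 2) / 2) := by
            have h := rpow_le_rpow_of_exponent_le (by norm_num : (1:ℝ) ≤ 4)
              (by linarith : -(1:ℝ)/2 ≤ (γ + 2) / 2)
            rw [h42] at h
            exact h
          have h5 : (1 + Q v) ^ ((γ + 2) / 2) / (4:ℝ) ^ ((γ + 2) / 2)
              ≤ (1 + Q v) ^ ((γ + 2) / 2) / (1/2) :=
            div_le_div_of_nonneg_left (rpow_nonneg (by linarith) _) (by norm_num) hb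
          calc Q (v - v') ^ ((γ + 2) / 2) ≤ ((1 + Q v) / 4) ^ ((γ + 2) / 2) := h3
            _ = (1 + Q v) ^ ((γ + 2) / 2) / (4:ℝ) ^ ((γ + 2) / 2) := h4
            _ ≤ (1 + Q v) ^ ((γ + 2) / 2) / (1/2) := h5
            _ = 2 * (1 + Q v) ^ ((γ + 2) / 2) := by ring
        have hstep : Q (v - v') ^ ((γ + 2) / 2) * Real.exp (-(1/4 * Q v'))
            ≤ 2 * (1 + Q v) ^ ((γ + 2) / 2) * Real.exp (-(1/4 * Q v')) :=
          mul_le_mul_of_nonneg_right h2 (Real.exp_pos _).le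
        have hterm1 : (0:ℝ) ≤ Real.exp (1/8) * Real.exp (-((1 + Q v) / 64)) *
            (Sv.indicator (fun u => Q (v - u) ^ ((γ + 2) / 2)) v' + Real.exp (-(1/8 * Q v'))) := by
          apply mul_nonneg (by positivity)
          nlinarith [Real.exp_pos (-(1/8 * Q v'))]
        linarith [hstep, hterm1]
    have hQveq : (∑ i, v i ^ 2) = Q v := rfl
    rw [hQveq]
    have hint1 : Integrable (fun v' : Fin 3 → ℝ =>
        Real.exp (1/8) * Real.exp (-((1 + Q v) / 64)) *
          (Sv.indicator (fun u => Q (v - u) ^ ((γ + 2) / 2)) v' + Real.exp (-(1/8 * Q v')))) := by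
      exact (hind_int.add hI8int).const_mul _
    have hint2 : Integrable (fun v' : Fin 3 → ℝ =>
        2 * (1 + Q v) ^ ((γ + 2) / 2) * Real.exp (-(1/4 * Q v'))) := hI4int.const_mul _
    have e1 : (∫ v', Sv.indicator (fun u => Q (v - u) ^ ((γ + 2) / 2)) v') = J := by
      rw [integral_indicator hSvmeas]
      rw [hJdef, hS0def]
      exact hSval
    have hval : (∫ v', D v') = c₁ * (Real.exp (1/8) * Real.exp (-((1 + Q v) / 64)) * (J + I8) +
        2 * (1 + Q v) ^ ((γ + 2) / 2) * I4) := by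
      rw [hDdef]
      rw [integral_const_mul, integral_add hint1 hint2, integral_const_mul, integral_const_mul,
        integral_add hind_int hI8int, e1]
    have hP64 : Real.exp (-((1 + Q v) / 64)) ≤ 64 * (1 + Q v) ^ ((γ + 2) / 2) := by
      have hx : (0:ℝ) < (1 + Q v) / 64 := by linarith
      have h3 : (1 + Q v) / 64 ≤ Real.exp ((1 + Q v) / 64) := by
        nlinarith [Real.add_one_le_exp ((1 + Q v) / 64)]
      have h2 : Real.exp (-((1 + Q v) / 64)) ≤ 64 / (1 + Q v) := by
        rw [Real.exp_neg]
        calc (Real.exp ((1 + Q v) / 64))⁻¹ ≤ ((1 + Q v) / 64)⁻¹ := by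
              apply inv_anti₀ hx h3
          _ = 64 / (1 + Q v) := by rw [inv_div]
      have h5 : (1 + Q v) ^ (-(1:ℝ)) ≤ (1 + Q v) ^ ((γ + 2) / 2) :=
        rpow_le_rpow_of_exponent_le hP1 (by linarith)
      calc Real.exp (-((1 + Q v) / 64)) ≤ 64 / (1 + Q v) := h2
        _ = 64 * (1 + Q v) ^ (-(1:ℝ)) := by rw [Real.rpow_neg_one]; ring
        _ ≤ 64 * (1 + Q v) ^ ((γ + 2) / 2) := by linarith [h5]
    calc |∫ v' : Fin 3 → ℝ, landauA γ j k (v - v') * v' k * maxwellian v'|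
        ≤ ∫ v', D v' := by
          rw [← Real.norm_eq_abs]
          exact norm_integral_le_of_norm_le hDint (Filter.Eventually.of_forall fun v' => by
            rw [Real.norm_eq_abs]; exact hDbound v')
      _ = c₁ * (Real.exp (1/8) * Real.exp (-((1 + Q v) / 64)) * (J + I8) +
          2 * (1 + Q v) ^ ((γ + 2) / 2) * I4) := hval
      _ ≤ c₁ * (Real.exp (1/8) * (64 * (1 + Q v) ^ ((γ + 2) / 2)) * (J + I8) +
          2 * (1 + Q v) ^ ((γ + 2) / 2) * I4) := by
          apply mul_le_mul_of_nonneg_left _ hc₁.le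
          have hJI : (0:ℝ) ≤ J + I8 := by linarith
          have hh := mul_le_mul_of_nonneg_right
            (mul_le_mul_of_nonneg_left hP64 (Real.exp_pos (1/8 : ℝ)).le) hJI
          linarith [hh]
      _ = (c₁ * (64 * Real.exp (1/8) * (J + I8) + 2 * I4)) * (1 + Q v) ^ ((γ + 2) / 2) := by
          ring
      _ ≤ (c₁ * (64 * Real.exp (1/8) * (J + I8) + 2 * I4) + 1) * (1 + Q v) ^ ((γ + 2) / 2) := by
          have hp : (0:ℝ) < (1 + Q v) ^ ((γ + 2) / 2) := rpow_pos_of_pos hPpos _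
          nlinarith [hp]
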